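/- Let K be a compact Hausdorff space, let 0 < ε < 1/2, and let f : ℓ₁ → C(K) satisfy ‖x − y‖₁/(1+ε) ≤ ‖f(x) − f(y)‖_∞ ≤ ‖x − y‖₁ for all x, y ∈ ℓ₁. Then the map g : ℓ₁ → C(K') defined by letting g(x) be the restriction of f(x) to the derived set K' (with its subspace topology) satisfies ((1−2ε)/(1+ε))·‖x − y‖₁ ≤ ‖g(x) − g(y)‖_∞ ≤ ‖x − y‖₁ for all x, y ∈ ℓ₁. -/

import Mathlib

open Filter Topology

/-- The derived set `K'` of the whole space `K` (the accumulation points of `K`), as a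
compact subspace of the compact Hausdorff space `K`. -/
noncomputable instance derivedSetUnivCompact (K : Type*) [TopologicalSpace K] [T1Space K]
    [CompactSpace K] : CompactSpace (derivedSet (Set.univ : Set K)) :=
  isCompact_iff_compactSpace.mp ((isClosed_derivedSet _).isCompact)

namespace RDaux

abbrev X : Type := lp (fun _ : ℕ => ℝ) 1

lemma l1_summable (z : X) : Summable fun i => |z i| := by
  have := (lp.memℓp z).summable (p := (1 : ENNReal)) (by norm_num)
  simpa using this

lemma l1_norm_eq (z : X) : ‖z‖ = ∑' i, |z i| := by
  have := lp.norm_eq_tsum_rpow (p := (1 : ENNReal)) (by norm_num) z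
  simpa using this

lemma single_norm (i : ℕ) (a : ℝ) : ‖(lp.single 1 i a : X)‖ = |a| := by
  simpa using lp.norm_single (E := fun _ : ℕ => ℝ) (p := (1 : ENNReal)) (by norm_num) (fun _ => a) i

lemma single_apply' (j i : ℕ) (a : ℝ) :
    (lp.single 1 j a : X) i = if i = j then a else 0 := by
  rw [lp.single_apply]
  split_ifs with h
  · subst h; simp
  · simp [Pi.single_apply, h]

lemma keyA (z : X) {m n : ℕ} (hmn : m ≠ n) (s t : ℝ) :
    ‖z‖ + |s| + |t| - 2 * |z m| - 2 * |z n| ≤ ‖z + lp.single 1 m s + lp.single 1 n t‖ := by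
  classical
  set w : X := z + lp.single 1 m s + lp.single 1 n t with hw
  have habs : ∀ a b : ℝ, |a| + (|b| - 2 * |a|) ≤ |a + b| := by
    intro a b
    have h2 : |b| - |-a| ≤ |b - -a| := abs_sub_abs_le_abs_sub _ _
    rw [abs_neg, sub_neg_eq_add, add_comm] at h2
    linarith
  have hcoord : ∀ i, (w : ∀ _ : ℕ, ℝ) i
      = z i + (if i = m then s else 0) + (if i = n then t else 0) := by
    intro i
    have h1 : (w : ∀ _ : ℕ, ℝ) i
        = z i + (lp.single 1 m s : X) i + (lp.single 1 n t : X) i := by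
      rw [hw, lp.coeFn_add, lp.coeFn_add]; rfl
    rw [h1, single_apply', single_apply']
  have hpt : ∀ i, |z i| + ((if i = m then |s| - 2 * |z m| else 0)
      + (if i = n then |t| - 2 * |z n| else 0)) ≤ |w i| := by
    intro i
    rw [hcoord i]
    by_cases him : i = m
    · subst him
      rw [if_pos rfl, if_pos rfl, if_neg hmn, if_neg hmn]
      simpa using habs (z i) s
    · by_cases hin : i = n
      · subst hin
        rw [if_neg him, if_neg him, if_pos rfl, if_pos rfl]
        simpa using habs (z i) t
      · simp [him, hin]
  have hc1 : Summable fun i : ℕ => if i = m then |s| - 2 * |z m| else 0 :=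
    (hasSum_ite_eq m _).summable
  have hc2 : Summable fun i : ℕ => if i = n then |t| - 2 * |z n| else 0 :=
    (hasSum_ite_eq n _).summable
  have hle := ((l1_summable z).add (hc1.add hc2)).tsum_le_tsum hpt (l1_summable w)
  have e1 : ∑' i : ℕ, (|z i| + ((if i = m then |s| - 2 * |z m| else 0)
      + (if i = n then |t| - 2 * |z n| else 0)))
      = (∑' i, |z i|) + ((|s| - 2 * |z m|) + (|t| - 2 * |z n|)) := by
    rw [(l1_summable z).tsum_add (hc1.add hc2), hc1.tsum_add hc2, tsum_ite_eq, tsum_ite_eq]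
  have e2 := l1_norm_eq z
  have e3 := l1_norm_eq w
  linarith

lemma abs_add_abs_le_max (P Q : ℝ) : |P| + |Q| ≤ max |P + Q| |P - Q| := by
  rcases le_total 0 P with hP | hP <;> rcases le_total 0 Q with hQ | hQ
  · exact le_max_of_le_left (by rw [abs_of_nonneg hP, abs_of_nonneg hQ]; exact le_abs_self _)
  · refine le_max_of_le_right ?_
    rw [abs_of_nonneg hP, abs_of_nonpos hQ]
    have := le_abs_self (P - Q); linarith
  · refine le_max_of_le_right ?_
    rw [abs_of_nonpos hP, abs_of_nonneg hQ]
    have := neg_abs_le (P - Q); linarith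
  · refine le_max_of_le_left ?_
    rw [abs_of_nonpos hP, abs_of_nonpos hQ]
    have := neg_abs_le (P + Q); linarith

end RDaux

set_option maxHeartbeats 1600000 in
open RDaux in
/-- If `K` is compact Hausdorff, `0 < ε < 1/2`, and `f : ℓ₁ → C(K)` satisfies
`‖x − y‖₁/(1+ε) ≤ ‖f x − f y‖ ≤ ‖x − y‖₁`, then `g : ℓ₁ → C(K')`, `g x = (f x)|_{K'}`,
satisfies `((1−2ε)/(1+ε))·‖x − y‖₁ ≤ ‖g x − g y‖ ≤ ‖x − y‖₁`. -/
theorem restrict_to_derivedSet_embedding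
    (K : Type*) [TopologicalSpace K] [CompactSpace K] [T2Space K]
    (ε : ℝ) (hε0 : 0 < ε) (hε : ε < 1 / 2)
    (f : lp (fun _ : ℕ => ℝ) 1 → C(K, ℝ))
    (hf : ∀ x y : lp (fun _ : ℕ => ℝ) 1,
      ‖x - y‖ / (1 + ε) ≤ ‖f x - f y‖ ∧ ‖f x - f y‖ ≤ ‖x - y‖) :
    ∀ x y : lp (fun _ : ℕ => ℝ) 1,
      ((1 - 2 * ε) / (1 + ε)) * ‖x - y‖ ≤
          ‖ContinuousMap.restrict (derivedSet (Set.univ : Set K)) (f x) -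
            ContinuousMap.restrict (derivedSet (Set.univ : Set K)) (f y)‖ ∧
        ‖ContinuousMap.restrict (derivedSet (Set.univ : Set K)) (f x) -
            ContinuousMap.restrict (derivedSet (Set.univ : Set K)) (f y)‖ ≤ ‖x - y‖ := by
  classical
  intro x y
  have h1ε : (0:ℝ) < 1 + ε := by linarith
  have h2ε : (0:ℝ) < 1 - 2 * ε := by linarith
  set S := derivedSet (Set.univ : Set K) with hS
  set R : C(S, ℝ) := ContinuousMap.restrict S (f x) - ContinuousMap.restrict S (f y) with hR
  have hRapp : ∀ (k : K) (hk : k ∈ S), R ⟨k, hk⟩ = f x k - f y k := by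
    intro k hk; simp [hR]
  -- upper bound
  have hupper : ‖R‖ ≤ ‖x - y‖ := by
    have h0 : (0:ℝ) ≤ ‖x - y‖ := norm_nonneg _
    refine (ContinuousMap.norm_le _ h0).mpr fun k => ?_
    have h1 : |f x (k : K) - f y (k : K)| ≤ ‖f x - f y‖ := by
      simpa using ContinuousMap.norm_coe_le_norm (f x - f y) (k : K)
    have h2 : R k = f x (k : K) - f y (k : K) := hRapp k k.2
    rw [Real.norm_eq_abs, h2]
    exact h1.trans (hf x y).2
  refine ⟨?_, hupper⟩
  -- lower bound
  rcases eq_or_ne x y with rfl | hxy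
  · simpa using norm_nonneg R
  have hd : 0 < ‖x - y‖ := norm_pos_iff.mpr (sub_ne_zero.mpr hxy)
  set d := ‖x - y‖ with hddef
  by_contra hcon
  push_neg at hcon
  set b := ‖R‖ with hbdef
  set cc := (1 - 2 * ε) / (1 + ε) * d with hccdef
  have hbcc : b < cc := hcon
  have hb0 : (0:ℝ) ≤ b := norm_nonneg _
  set θ := (b + cc) / 2 with hθdef
  have hθb : b < θ := by rw [hθdef]; linarith
  have hθcc : θ < cc := by rw [hθdef]; linarith
  -- K is nonempty
  haveI hKne : Nonempty K := by
    by_contra hKe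
    rw [not_nonempty_iff] at hKe
    have h1 : ‖f x - f y‖ ≤ 0 := (ContinuousMap.norm_le _ le_rfl).mpr fun k => isEmptyElim k
    have h2 := (hf x y).1
    have h3 : 0 < d / (1 + ε) := div_pos hd h1ε
    rw [← hddef] at h2
    linarith
  -- maximizing points
  have hmax : ∀ u v : X, ∃ k : K, ‖u - v‖ / (1 + ε) ≤ |f u k - f v k| := by
    intro u v
    have hcont : Continuous fun k : K => |f u k - f v k| :=
      ((f u).continuous.sub (f v).continuous).abs
    obtain ⟨k, -, hk⟩ := isCompact_univ.exists_isMaxOn Set.univ_nonempty hcont.continuousOn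
    refine ⟨k, le_trans (hf u v).1 ?_⟩
    refine (ContinuousMap.norm_le _ (abs_nonneg _)).mpr fun k' => ?_
    simpa using hk (Set.mem_univ k')
  choose Φ hΦ using hmax
  -- pointwise Lipschitz
  have hLip : ∀ (z w : X) (k : K), |f z k - f w k| ≤ ‖z - w‖ := by
    intro z w k
    have h1 : |f z k - f w k| ≤ ‖f z - f w‖ := by
      simpa using ContinuousMap.norm_coe_le_norm (f z - f w) k
    exact h1.trans (hf z w).2
  -- the set D is finite
  set D : Set K := {k | θ ≤ |f x k - f y k|} with hDdef
  have hDclosed : IsClosed D :=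
    isClosed_le continuous_const (((f x).continuous.sub (f y).continuous).abs)
  have hDfin : D.Finite := by
    have hiso : ∀ k ∈ D, IsOpen ({k} : Set K) := by
      intro k hk
      have hknd : k ∉ S := by
        intro hkS
        have h1 : |R ⟨k, hkS⟩| ≤ b := by
          simpa using ContinuousMap.norm_coe_le_norm R ⟨k, hkS⟩
        rw [hRapp k hkS] at h1
        have h2 : θ ≤ |f x k - f y k| := hk
        linarith
      rw [hS, mem_derivedSet, accPt_iff_nhds] at hknd
      push_neg at hknd
      obtain ⟨U, hU, hU2⟩ := hknd
      refine isOpen_iff_mem_nhds.mpr fun k' hk' => ?_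
      rcases Set.mem_singleton_iff.mp hk' with rfl
      exact Filter.mem_of_superset hU fun z hz =>
        Set.mem_singleton_iff.mpr (hU2 z ⟨hz, Set.mem_univ z⟩)
    have hcomp : IsCompact D := hDclosed.isCompact
    obtain ⟨t, ht⟩ := hcomp.elim_finite_subcover (fun k : D => ({(k : K)} : Set K))
      (fun k => hiso k k.2) (fun k hk => Set.mem_iUnion.mpr ⟨⟨k, hk⟩, rfl⟩)
    exact (t.finite_toSet.biUnion fun i _ => Set.finite_singleton _).subset ht
  set N := hDfin.toFinset.card with hNdef
  -- choose δ
  set δ := min (d * (1 - 2 * ε) / 8) ((cc - θ) * (1 + ε) / 8) with hδdef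
  have hδ0 : 0 < δ := by
    refine lt_min ?_ ?_
    · positivity
    · have : 0 < cc - θ := by linarith
      positivity
  have hδ1 : δ ≤ d * (1 - 2 * ε) / 8 := min_le_left _ _
  have hδ2 : δ ≤ (cc - θ) * (1 + ε) / 8 := min_le_right _ _
  -- good coordinates
  have hnxy : ‖x - y‖ = d := hddef.symm
  have hfin : {i : ℕ | ¬ |(x - y) i| < δ}.Finite := by
    have hs := (l1_summable (x - y)).tendsto_cofinite_zero
    have h1 : ∀ᶠ i in Filter.cofinite, |(x - y) i| < δ := by
      have := hs.eventually (gt_mem_nhds hδ0)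
      simpa using this
    exact Filter.eventually_cofinite.mp h1
  have hinf : {i : ℕ | |(x - y) i| < δ}.Infinite := by
    apply Set.infinite_of_finite_compl
    have : {i : ℕ | |(x - y) i| < δ}ᶜ = {i : ℕ | ¬ |(x - y) i| < δ} := rfl
    rw [this]; exact hfin
  obtain ⟨T, hTsub, hTcard⟩ := hinf.exists_subset_card_eq (2 ^ N + 1)
  have hTmem : ∀ j ∈ T, |(x - y) j| < δ := fun j hj => hTsub hj
  -- configurations
  set u : ℕ → X := fun j => x + lp.single 1 j d with hudef
  set v : ℕ → X := fun j => y + lp.single 1 j d with hvdef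
  have hdiffuv : ∀ j l : ℕ, u j - v l = (x - y) + lp.single 1 j d + lp.single 1 l (-d) := by
    intro j l
    simp only [hudef, hvdef, lp.single_neg]
    abel
  have habsd : |d| = d := abs_of_pos hd
  have hdist_low : ∀ j ∈ T, ∀ l ∈ T, j ≠ l → 3 * d - 4 * δ ≤ ‖u j - v l‖ := by
    intro j hj l hl hjl
    rw [hdiffuv j l]
    have h1 := keyA (x - y) hjl d (-d)
    have h2 : |(-d)| = d := by rw [abs_neg, habsd]
    have h3 := hTmem j hj
    have h4 := hTmem l hl
    rw [habsd, h2, hnxy] at h1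
    linarith
  have hdiag : ∀ j : ℕ, u j - v j = x - y := by
    intro j; simp only [hudef, hvdef]; abel
  have husx : ∀ j : ℕ, ‖u j - x‖ = d := by
    intro j
    have : u j - x = lp.single 1 j d := by simp only [hudef]; abel
    rw [this, single_norm, habsd]
  have hvsy : ∀ j : ℕ, ‖v j - y‖ = d := by
    intro j
    have : v j - y = lp.single 1 j d := by simp only [hvdef]; abel
    rw [this, single_norm, habsd]
  have huu : ∀ j l : ℕ, ‖u j - u l‖ ≤ 2 * d := by
    intro j l
    have h1 : u j - u l = lp.single 1 j d - lp.single 1 l d := by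
      simp only [hudef]; abel
    rw [h1]
    have := norm_sub_le (lp.single 1 j d : X) (lp.single 1 l d)
    rw [single_norm, single_norm, habsd] at this
    linarith
  have hvv : ∀ j l : ℕ, ‖v j - v l‖ ≤ 2 * d := by
    intro j l
    have h1 : v j - v l = lp.single 1 j d - lp.single 1 l d := by
      simp only [hvdef]; abel
    rw [h1]
    have := norm_sub_le (lp.single 1 j d : X) (lp.single 1 l d)
    rw [single_norm, single_norm, habsd] at this
    linarith
  have huv3 : ∀ j l : ℕ, ‖u j - v l‖ ≤ 3 * d := by
    intro j l
    have h1 : u j - v l = (x - y) + (lp.single 1 j d - lp.single 1 l d) := by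
      simp only [hudef, hvdef]; abel
    rw [h1]
    have h2 := norm_add_le (x - y) ((lp.single 1 j d : X) - lp.single 1 l d)
    have h3 := norm_sub_le (lp.single 1 j d : X) (lp.single 1 l d)
    rw [single_norm, single_norm, habsd] at h3
    rw [hnxy] at h2
    linarith
  -- the witness points lie in D
  have harith : θ + 2 * d ≤ (3 * d - 4 * δ) / (1 + ε) := by
    rw [le_div_iff₀ h1ε]
    have hcc2 : cc * (1 + ε) = (1 - 2 * ε) * d := by
      rw [hccdef]; field_simp
    nlinarith [hδ2, hθcc, h1ε]
  have hκD : ∀ j ∈ T, ∀ l ∈ T, j ≠ l → Φ (u j) (v l) ∈ hDfin.toFinset := by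
    intro j hj l hl hjl
    rw [Set.Finite.mem_toFinset, hDdef, Set.mem_setOf_eq]
    set k := Φ (u j) (v l) with hkdef
    have h1 := hΦ (u j) (v l)
    have h2 : (3 * d - 4 * δ) / (1 + ε) ≤ ‖u j - v l‖ / (1 + ε) :=
      (div_le_div_iff_of_pos_right h1ε).mpr (hdist_low j hj l hl hjl)
    have h3 : |f (u j) k - f x k| ≤ d := by
      have := hLip (u j) x k; rwa [husx j] at this
    have h4 : |f (v l) k - f y k| ≤ d := by
      have := hLip (v l) y k; rwa [hvsy l] at this
    have h5 : |f (u j) k - f (v l) k| ≤ |f (u j) k - f x k| + |f x k - f y k|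
        + |f y k - f (v l) k| := by
      have t1 := abs_sub_le (f (u j) k) (f x k) (f (v l) k)
      have t2 := abs_sub_le (f x k) (f y k) (f (v l) k)
      linarith
    have h6 : |f y k - f (v l) k| = |f (v l) k - f y k| := abs_sub_comm _ _
    rw [h6] at h5
    linarith
  -- pigeonhole on profiles
  set prof : ℕ → Finset K := fun j =>
    hDfin.toFinset.filter (fun k => ∃ l ∈ T, l ≠ j ∧ Φ (u l) (v j) = k) with hprofdef
  have hmaps : ∀ j ∈ T, prof j ∈ hDfin.toFinset.powerset := fun j _ =>
    Finset.mem_powerset.mpr (Finset.filter_subset _ _)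
  have hcard : hDfin.toFinset.powerset.card < T.card := by
    rw [hTcard, Finset.card_powerset, ← hNdef]
    exact Nat.lt_succ_self _
  obtain ⟨a, ha, a2, ha2, hne, heq⟩ :=
    Finset.exists_ne_map_eq_of_card_lt_of_maps_to hcard hmaps
  set k0 := Φ (u a) (v a2) with hk0def
  have hk0D : k0 ∈ hDfin.toFinset := hκD a ha a2 ha2 hne
  have hmem2 : k0 ∈ prof a2 := by
    rw [hprofdef]
    exact Finset.mem_filter.mpr ⟨hk0D, a, ha, hne, rfl⟩
  have hmem1 : k0 ∈ prof a := by rw [heq]; exact hmem2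
  obtain ⟨-, a', ha', ha'ne, hκa'⟩ := Finset.mem_filter.mp hmem1
  -- final four-point contradiction
  set P := f (u a) k0 - f (v a2) k0 with hPdef
  set Q := f (u a') k0 - f (v a) k0 with hQdef
  have hL : (3 * d - 4 * δ) / (1 + ε) ≤ |P| := by
    have h1 := hΦ (u a) (v a2)
    have h2 : (3 * d - 4 * δ) / (1 + ε) ≤ ‖u a - v a2‖ / (1 + ε) :=
      (div_le_div_iff_of_pos_right h1ε).mpr (hdist_low a ha a2 ha2 hne)
    rw [hPdef, hk0def]
    exact h2.trans h1
  have hLQ : (3 * d - 4 * δ) / (1 + ε) ≤ |Q| := by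
    have h1 := hΦ (u a') (v a)
    rw [hκa'] at h1
    have h2 : (3 * d - 4 * δ) / (1 + ε) ≤ ‖u a' - v a‖ / (1 + ε) :=
      (div_le_div_iff_of_pos_right h1ε).mpr (hdist_low a' ha' a ha ha'ne)
    rw [hQdef]
    exact h2.trans h1
  have hB1 : |f (u a) k0 - f (v a) k0| ≤ d := by
    have := hLip (u a) (v a) k0
    rwa [hdiag a, hnxy] at this
  have hB2 : |f (u a') k0 - f (v a2) k0| ≤ 3 * d := (hLip _ _ _).trans (huv3 a' a2)
  have hB3 : |f (u a) k0 - f (u a') k0| ≤ 2 * d := (hLip _ _ _).trans (huu a a')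
  have hB4 : |f (v a) k0 - f (v a2) k0| ≤ 2 * d := (hLip _ _ _).trans (hvv a a2)
  have hPQ1 : |P + Q| ≤ 4 * d := by
    have he : P + Q = (f (u a) k0 - f (v a) k0) + (f (u a') k0 - f (v a2) k0) := by
      rw [hPdef, hQdef]; ring
    rw [he]
    exact (abs_add_le _ _).trans (by linarith)
  have hPQ2 : |P - Q| ≤ 4 * d := by
    have he : P - Q = (f (u a) k0 - f (u a') k0) + (f (v a) k0 - f (v a2) k0) := by
      rw [hPdef, hQdef]; ring
    rw [he]
    exact (abs_add_le _ _).trans (by linarith)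
  have hmax4 := abs_add_abs_le_max P Q
  have hfinal : 2 * ((3 * d - 4 * δ) / (1 + ε)) ≤ 4 * d := by
    have h1 : max |P + Q| |P - Q| ≤ 4 * d := max_le hPQ1 hPQ2
    linarith
  have h7 : (3 * d - 4 * δ) / (1 + ε) ≤ 2 * d := by linarith
  have h8 : 3 * d - 4 * δ ≤ 2 * d * (1 + ε) := (div_le_iff₀ h1ε).mp h7
  nlinarith [hδ1, mul_pos hd h2ε]
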